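/- Fix integers 1 ≤ ℓ ≤ d−1 and reals b_1 > b_2 > ⋯ > b_d > 0. Let M be an ℓ×d complex matrix with minors ω_M(I) as below, and let (c_I) be a family of nonzero complex numbers indexed by the ℓ-element subsets I ⊆ {1,…,d}. Suppose that for every ℓ-element subset I one has Σ_J c_J · ω_M(J) = 0, where the sum runs over all ℓ-element subsets J with p_J = p_I. Then ω_M(I) = 0 for every ℓ-element subset I; equivalently, the rows of M are linearly dependent. -/

import Mathlib

/-- The minor `ω_M(I)` of an `ℓ×d` matrix `M`: the determinant of the `ℓ×ℓ` submatrix of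
`M` whose columns are those indexed by `I`, taken in increasing order (defined to be `0`
when `I` does not have `ℓ` elements). -/
noncomputable def minorOn {ℓ d : ℕ} (M : Matrix (Fin ℓ) (Fin d) ℂ)
    (I : Finset (Fin d)) : ℂ :=
  if h : I.card = ℓ then
    (M.submatrix id (fun t : Fin ℓ => ((I.orderIsoOfFin h t) : Fin d))).det
  else 0

open Matrix Finset Submodule Module

/-- A minor is nonzero iff the corresponding columns are linearly independent. -/
lemma minorOn_ne_zero_iff {ℓ d : ℕ} (M : Matrix (Fin ℓ) (Fin d) ℂ)
    {J : Finset (Fin d)} (hJ : J.card = ℓ) :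
    minorOn M J ≠ 0 ↔
      LinearIndependent ℂ (fun t : Fin ℓ => Mᵀ (J.orderEmbOfFin hJ t)) := by
  classical
  rw [minorOn, dif_pos hJ, ← isUnit_iff_ne_zero, ← Matrix.isUnit_iff_isUnit_det,
    ← Matrix.linearIndependent_cols_iff_isUnit]
  have h : (fun t : Fin ℓ =>
      (M.submatrix id (fun t : Fin ℓ => ((J.orderIsoOfFin hJ t) : Fin d)))ᵀ t)
      = fun t : Fin ℓ => Mᵀ (J.orderEmbOfFin hJ t) := by
    funext t
    funext i
    simp [Matrix.transpose_apply, Matrix.submatrix_apply, Finset.coe_orderIsoOfFin_apply]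
  rw [← h]; rfl

/-- Span of the first `n` columns of `M`. -/
noncomputable def colSpanUpTo {ℓ d : ℕ} (M : Matrix (Fin ℓ) (Fin d) ℂ) (n : ℕ) :
    Submodule ℂ (Fin ℓ → ℂ) :=
  Submodule.span ℂ (Mᵀ '' {j : Fin d | (j : ℕ) < n})

open scoped Classical in
/-- Pivot columns: those not in the span of the earlier columns. -/
noncomputable def pivots {ℓ d : ℕ} (M : Matrix (Fin ℓ) (Fin d) ℂ) : Finset (Fin d) :=
  Finset.univ.filter (fun j => Mᵀ j ∉ colSpanUpTo M (j : ℕ))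

lemma mem_pivots {ℓ d : ℕ} {M : Matrix (Fin ℓ) (Fin d) ℂ} {j : Fin d} :
    j ∈ pivots M ↔ Mᵀ j ∉ colSpanUpTo M (j : ℕ) := by
  classical
  simp [pivots]

open scoped Classical in
lemma card_pivots_filter {ℓ d : ℕ} (M : Matrix (Fin ℓ) (Fin d) ℂ) (n : ℕ) :
    ((pivots M).filter (fun j : Fin d => (j : ℕ) < n)).card = finrank ℂ (colSpanUpTo M n) := by
  induction n with
  | zero =>
    have h1 : (pivots M).filter (fun j : Fin d => (j : ℕ) < 0) = ∅ := by simp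
    have h2 : {j : Fin d | (j : ℕ) < 0} = (∅ : Set (Fin d)) := by ext; simp
    erw [h1, colSpanUpTo, h2, Set.image_empty, Submodule.span_empty]
    simp
  | succ n ih =>
    by_cases hnd : n < d
    · set x : Fin d := ⟨n, hnd⟩ with hxdef
      have hset : {j : Fin d | (j : ℕ) < n + 1} = insert x {j : Fin d | (j : ℕ) < n} := by
        ext j
        simp only [Set.mem_setOf_eq, Set.mem_insert_iff, hxdef, Fin.ext_iff]
        omega
      have hspan : colSpanUpTo M (n + 1) = (ℂ ∙ (Mᵀ x)) ⊔ colSpanUpTo M n := by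
        erw [colSpanUpTo, hset, Set.image_insert_eq, Submodule.span_insert]
        rfl
      by_cases hmem : Mᵀ x ∈ colSpanUpTo M n
      · have hrk : colSpanUpTo M (n + 1) = colSpanUpTo M n := by
          rw [hspan, sup_eq_right.mpr ((Submodule.span_singleton_le_iff_mem _ _).mpr hmem)]
        have hfil : (pivots M).filter (fun j : Fin d => (j : ℕ) < n + 1)
            = (pivots M).filter (fun j : Fin d => (j : ℕ) < n) := by
          apply Finset.filter_congr
          intro j hj
          rw [mem_pivots] at hj
          constructor
          · intro hlt
            rcases Nat.lt_succ_iff_lt_or_eq.mp hlt with h | h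
            · exact h
            · exfalso
              have hjx : j = x := by
                apply Fin.ext; simp [hxdef, h]
              rw [hjx] at hj
              exact hj hmem
          · omega
        rw [hfil, hrk, ih]
      · have hx_piv : x ∈ pivots M := mem_pivots.mpr hmem
        have hfil : (pivots M).filter (fun j : Fin d => (j : ℕ) < n + 1)
            = insert x ((pivots M).filter (fun j : Fin d => (j : ℕ) < n)) := by
          ext j
          simp only [Finset.mem_filter, Finset.mem_insert]
          constructor
          · rintro ⟨hjp, hlt⟩
            rcases Nat.lt_succ_iff_lt_or_eq.mp hlt with h | h
            · exact Or.inr ⟨hjp, h⟩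
            · exact Or.inl (by apply Fin.ext; simp [hxdef, h])
          · rintro (rfl | ⟨hjp, hlt⟩)
            · exact ⟨hx_piv, by simp [hxdef]⟩
            · exact ⟨hjp, by omega⟩
        have hxnot : x ∉ (pivots M).filter (fun j : Fin d => (j : ℕ) < n) := by
          simp [hxdef]
        have hv : Mᵀ x ≠ 0 := fun h => hmem (h ▸ zero_mem _)
        have hle : finrank ℂ (colSpanUpTo M (n + 1))
            ≤ finrank ℂ (colSpanUpTo M n) + 1 := by
          rw [hspan]
          have h1 := Submodule.finrank_add_le_finrank_add_finrank (ℂ ∙ (Mᵀ x))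
            (colSpanUpTo M n)
          rw [finrank_span_singleton hv] at h1
          omega
        have hlt : finrank ℂ (colSpanUpTo M n) < finrank ℂ (colSpanUpTo M (n + 1)) := by
          rw [hspan]
          apply Submodule.finrank_lt_finrank_of_lt
          refine lt_of_le_of_ne le_sup_right (fun h => hmem ?_)
          rw [h]
          exact Submodule.mem_sup_left (Submodule.mem_span_singleton_self _)
        rw [hfil, Finset.card_insert_of_notMem hxnot, ih]
        omega
    · have hiff : ∀ j : Fin d, ((j : ℕ) < n + 1 ↔ (j : ℕ) < n) := by
        intro j
        have := j.isLt
        omega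
      have hfil : (pivots M).filter (fun j : Fin d => (j : ℕ) < n + 1)
          = (pivots M).filter (fun j : Fin d => (j : ℕ) < n) :=
        Finset.filter_congr (fun j _ => hiff j)
      have hset : {j : Fin d | (j : ℕ) < n + 1} = {j : Fin d | (j : ℕ) < n} :=
        Set.ext (fun j => hiff j)
      have hSp : colSpanUpTo M (n + 1) = colSpanUpTo M n := by
        rw [colSpanUpTo, hset]; rfl
      rw [hfil, hSp, ih]

lemma pivots_indep {ℓ d : ℕ} (M : Matrix (Fin ℓ) (Fin d) ℂ) {P : Finset (Fin d)}
    (hP : P = pivots M) (hcard : P.card = ℓ) (k : ℕ) (hk : k ≤ ℓ) :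
    LinearIndependent ℂ (fun t : Fin k => Mᵀ (P.orderEmbOfFin hcard (Fin.castLE hk t))) := by
  induction k with
  | zero => exact linearIndependent_empty_type
  | succ k ih =>
    have hk' : k ≤ ℓ := Nat.le_of_succ_le hk
    have heq : (fun t : Fin (k + 1) => Mᵀ (P.orderEmbOfFin hcard (Fin.castLE hk t)))
        = Fin.snoc (fun t : Fin k => Mᵀ (P.orderEmbOfFin hcard (Fin.castLE hk' t)))
            (Mᵀ (P.orderEmbOfFin hcard ⟨k, hk⟩)) := by
      funext t
      refine Fin.lastCases ?_ ?_ t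
      · rw [Fin.snoc_last]
        congr 2
      · intro s
        rw [Fin.snoc_castSucc]
        congr 2
    rw [heq]
    refine linearIndependent_fin_snoc.mpr ⟨ih hk', ?_⟩
    intro hmem
    have hpiv : P.orderEmbOfFin hcard ⟨k, hk⟩ ∈ pivots M :=
      hP ▸ Finset.orderEmbOfFin_mem P hcard _
    rw [mem_pivots] at hpiv
    apply hpiv
    refine Submodule.span_le.mpr ?_ hmem
    rintro v ⟨s, rfl⟩
    apply Submodule.subset_span
    refine ⟨P.orderEmbOfFin hcard (Fin.castLE hk' s), ?_, rfl⟩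
    have h1 : Fin.castLE hk' s < (⟨k, hk⟩ : Fin ℓ) := by
      rw [Fin.lt_def]
      simp
    have h2 := (P.orderEmbOfFin hcard).strictMono h1
    rw [Fin.lt_def] at h2
    exact h2

set_option maxHeartbeats 1000000 in
open scoped Classical in
/-- **Lemma B.3.** Fix `b_1 > ⋯ > b_d > 0` and an `ℓ×d` complex matrix `M`, and nonzero
scalars `c_I` indexed by the `ℓ`-element subsets of `{1,…,d}`. If for every `ℓ`-element
subset `I` one has `∑_{J : p_J = p_I} c_J ω_M(J) = 0` (where `p_J = ∏_{i∈J} b_i`), then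
`ω_M(I) = 0` for every `ℓ`-element subset `I`. -/
theorem stmt4 (ℓ d : ℕ) (hℓ1 : 1 ≤ ℓ) (hℓd : ℓ ≤ d - 1)
    (b : Fin d → ℝ) (hb : StrictAnti b) (hbpos : ∀ i, 0 < b i)
    (M : Matrix (Fin ℓ) (Fin d) ℂ)
    (c : Finset (Fin d) → ℂ) (hc : ∀ I : Finset (Fin d), I.card = ℓ → c I ≠ 0)
    (hsum : ∀ I : Finset (Fin d), I.card = ℓ →
      ∑ J ∈ Finset.univ.filter
          (fun J : Finset (Fin d) => J.card = ℓ ∧ ∏ i ∈ J, b i = ∏ i ∈ I, b i),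
        c J * minorOn M J = 0) :
    ∀ I : Finset (Fin d), I.card = ℓ → minorOn M I = 0 := by
  by_contra hcon
  push_neg at hcon
  obtain ⟨I, hI, hMI⟩ := hcon
  -- the full column span has dimension ℓ
  have hIindep := (minorOn_ne_zero_iff M hI).mp hMI
  have hrank : finrank ℂ (colSpanUpTo M d) = ℓ := by
    apply le_antisymm
    · have h1 : finrank ℂ (colSpanUpTo M d) ≤ finrank ℂ (Fin ℓ → ℂ) :=
        Submodule.finrank_le _
      simpa using h1
    · set W := colSpanUpTo M d with hW
      have hmem : ∀ t : Fin ℓ, Mᵀ (I.orderEmbOfFin hI t) ∈ W := by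
        intro t
        apply Submodule.subset_span
        exact ⟨_, (I.orderEmbOfFin hI t).isLt, rfl⟩
      set u : Fin ℓ → W := fun t => ⟨Mᵀ (I.orderEmbOfFin hI t), hmem t⟩ with hu
      have hucomp : LinearIndependent ℂ (W.subtype ∘ u) := hIindep
      have huind : LinearIndependent ℂ u := LinearIndependent.of_comp W.subtype hucomp
      simpa using huind.fintype_card_le_finrank
  have hcard : (pivots M).card = ℓ := by
    have h1 := card_pivots_filter M d
    have h2 : (pivots M).filter (fun j : Fin d => (j : ℕ) < d) = pivots M :=
      Finset.filter_true_of_mem (fun j _ => j.isLt)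
    rw [h2, hrank] at h1
    exact h1
  set P := pivots M with hP
  set embP := P.orderEmbOfFin hcard with hembP
  -- the pivot columns are independent
  have hPindep : LinearIndependent ℂ (fun t : Fin ℓ => Mᵀ (embP t)) := by
    have h := pivots_indep M hP hcard ℓ le_rfl
    have hcast : ∀ t : Fin ℓ, Fin.castLE le_rfl t = t := fun t => Fin.ext rfl
    simp only [hcast] at h
    exact h
  have hMP : minorOn M P ≠ 0 := (minorOn_ne_zero_iff M hcard).mpr hPindep
  -- Gale minimality of pivots
  have hgale : ∀ (J : Finset (Fin d)) (hJ : J.card = ℓ), minorOn M J ≠ 0 →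
      ∀ t : Fin ℓ, embP t ≤ J.orderEmbOfFin hJ t := by
    intro J hJ hmJ t
    set embJ := J.orderEmbOfFin hJ with hembJ
    set a := embJ t with ha
    have hJindep := (minorOn_ne_zero_iff M hJ).mp hmJ
    -- dim of columns up to a is at least t+1
    set W := colSpanUpTo M ((a : ℕ) + 1) with hW
    have hcast : (t : ℕ) + 1 ≤ ℓ := t.isLt
    have hmem : ∀ s : Fin ((t : ℕ) + 1), Mᵀ (embJ (Fin.castLE hcast s)) ∈ W := by
      intro s
      apply Submodule.subset_span
      refine ⟨embJ (Fin.castLE hcast s), ?_, rfl⟩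
      have hsle : Fin.castLE hcast s ≤ t := by
        rw [Fin.le_def]
        simp only [Fin.coe_castLE]
        omega
      have h2 : embJ (Fin.castLE hcast s) ≤ embJ t := embJ.monotone hsle
      rw [Fin.le_def] at h2
      simp only [Set.mem_setOf_eq, ha]
      omega
    set u : Fin ((t : ℕ) + 1) → W := fun s => ⟨Mᵀ (embJ (Fin.castLE hcast s)), hmem s⟩
      with hu
    have hucomp : LinearIndependent ℂ (W.subtype ∘ u) :=
      hJindep.comp (Fin.castLE hcast) (Fin.castLE_injective hcast)
    have huind : LinearIndependent ℂ u := LinearIndependent.of_comp W.subtype hucomp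
    have hdim : (t : ℕ) + 1 ≤ finrank ℂ W := by
      simpa using huind.fintype_card_le_finrank
    have hcount : (t : ℕ) + 1 ≤ (P.filter (fun j : Fin d => (j : ℕ) < (a : ℕ) + 1)).card := by
      rw [hP, card_pivots_filter M ((a : ℕ) + 1)]
      exact hdim
    by_contra hlt
    push_neg at hlt
    -- hlt : a < embP t
    have hsub : P.filter (fun j : Fin d => (j : ℕ) < (a : ℕ) + 1)
        ⊆ (Finset.Iio t).image embP := by
      intro j hj
      rw [Finset.mem_filter] at hj
      obtain ⟨hjp, hja⟩ := hj
      have hjrange : j ∈ Set.range embP := by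
        rw [hembP, Finset.range_orderEmbOfFin]
        exact hjp
      obtain ⟨s, hs⟩ := hjrange
      have hslt : s < t := by
        have h1 : embP s < embP t := by
          rw [hs]
          calc j ≤ a := by rw [Fin.le_def]; omega
          _ < embP t := hlt
        exact (P.orderEmbOfFin hcard).strictMono.lt_iff_lt.mp h1
      exact Finset.mem_image.mpr ⟨s, Finset.mem_Iio.mpr hslt, hs⟩
    have hcard2 : (P.filter (fun j : Fin d => (j : ℕ) < (a : ℕ) + 1)).card ≤ (t : ℕ) := by
      calc (P.filter (fun j : Fin d => (j : ℕ) < (a : ℕ) + 1)).card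
          ≤ ((Finset.Iio t).image embP).card := Finset.card_le_card hsub
        _ ≤ (Finset.Iio t).card := Finset.card_image_le
        _ = (t : ℕ) := Fin.card_Iio t
    omega
  -- product comparison
  have hprodeq : ∀ (J : Finset (Fin d)) (hJ : J.card = ℓ),
      ∏ i ∈ J, b i = ∏ t : Fin ℓ, b (J.orderEmbOfFin hJ t) := by
    intro J hJ
    rw [← Finset.prod_coe_sort J b,
      ← Equiv.prod_comp (J.orderIsoOfFin hJ).toEquiv (fun x : J => b ↑x)]
    simp [Finset.coe_orderIsoOfFin_apply]
  have hstrict : ∀ (J : Finset (Fin d)) (hJ : J.card = ℓ), minorOn M J ≠ 0 → J ≠ P →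
      ∏ i ∈ J, b i < ∏ i ∈ P, b i := by
    intro J hJ hmJ hne
    rw [hprodeq J hJ, hprodeq P hcard]
    have hne' : ∃ t : Fin ℓ, embP t ≠ J.orderEmbOfFin hJ t := by
      by_contra hall
      push_neg at hall
      apply hne
      apply Finset.coe_injective
      have hfun : ⇑(J.orderEmbOfFin hJ) = ⇑(P.orderEmbOfFin hcard) := by
        funext t
        exact (hall t).symm
      rw [← Finset.range_orderEmbOfFin J hJ, ← Finset.range_orderEmbOfFin P hcard, hfun]
    obtain ⟨t0, ht0⟩ := hne'
    apply Finset.prod_lt_prod (fun t _ => hbpos _) (fun t _ => hb.antitone (hgale J hJ hmJ t))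
    exact ⟨t0, Finset.mem_univ t0, hb (lt_of_le_of_ne (hgale J hJ hmJ t0) ht0)⟩
  -- conclude
  have hsum0 := hsum P hcard
  rw [Finset.sum_eq_single P] at hsum0
  · rcases mul_eq_zero.mp hsum0 with h | h
    · exact hc P hcard h
    · exact hMP h
  · intro J hJmem hJne
    rw [Finset.mem_filter] at hJmem
    obtain ⟨-, hJcard, hJprod⟩ := hJmem
    by_cases hmJ : minorOn M J = 0
    · rw [hmJ, mul_zero]
    · exact absurd hJprod (ne_of_lt (hstrict J hJcard hmJ hJne))
  · intro h
    exact absurd (Finset.mem_filter.mpr ⟨Finset.mem_univ _, hcard, rfl⟩) h
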